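/- Let n ≥ 1, d ≥ 1, β ∈ (0,1), τ ∈ (0,1), and D ≥ 0. Let w₁, …, w_n be independent ℝ^d-valued random vectors with P[‖w_i‖ > D] ≤ exp(−(1 + 1/β)/τ) for each i. Then with probability at least 1 − e^{−0.3n}, the following holds: for every subset S ⊆ {1,…,n} with |S| ≥ nβ, the set {i ∈ S : ‖w_i‖ ≤ D} has cardinality at least (1 − τ)|S|. -/

import Mathlib

open MeasureTheory ProbabilityTheory Filter Finset

/-- Uniform norm-concentration lemma (Lemma `E-norm-genr` of the paper):
with probability at least `1 − e^{−0.3n}`, for every subset `S ⊆ {1,…,n}`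
with `|S| ≥ nβ`, at least `(1 − τ)|S|` of the indices `i ∈ S` satisfy
`‖w_i‖ ≤ D`. -/
theorem uniform_norm_concentration
    (n d : ℕ) (hn : 1 ≤ n) (hd : 1 ≤ d)
    (β τ D : ℝ) (hβ : β ∈ Set.Ioo (0 : ℝ) 1) (hτ : τ ∈ Set.Ioo (0 : ℝ) 1)
    (hD : 0 ≤ D)
    (Ω : Type*) [MeasureSpace Ω] [IsProbabilityMeasure (ℙ : Measure Ω)]
    (w : Fin n → Ω → EuclideanSpace ℝ (Fin d))
    (hmeas : ∀ i, Measurable (w i))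
    (hindep : iIndepFun w ℙ)
    (htail : ∀ i, (ℙ {ω | D < ‖w i ω‖}).toReal ≤ Real.exp (-(1 + 1 / β) / τ)) :
    1 - Real.exp (-(0.3 : ℝ) * n)
      ≤ (ℙ {ω | ∀ S : Finset (Fin n), (n : ℝ) * β ≤ S.card →
            (1 - τ) * S.card ≤ ((S.filter (fun i => ‖w i ω‖ ≤ D)).card : ℝ)}).toReal := by
  obtain ⟨hβ0, hβ1⟩ := hβ
  obtain ⟨hτ0, hτ1⟩ := hτ
  set p : ℝ := Real.exp (-(1 + 1 / β) / τ) with hp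
  have hp0 : 0 < p := Real.exp_pos _
  set k : ℕ := ⌊τ * β * n⌋₊ + 1 with hk
  have hτβn0 : (0:ℝ) ≤ τ * β * n := by positivity
  have hklt : τ * β * n < k := by
    have := Nat.lt_floor_add_one (τ * β * n)
    push_cast [hk]; push_cast at this; linarith
  set A : Set Ω := {ω | ∀ S : Finset (Fin n), (n : ℝ) * β ≤ S.card →
      (1 - τ) * S.card ≤ ((S.filter (fun i => ‖w i ω‖ ≤ D)).card : ℝ)} with hA
  set bad : Fin n → Set Ω := fun i => {ω | D < ‖w i ω‖} with hbad
  -- complement inclusion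
  have hsub : Aᶜ ⊆ ⋃ T ∈ Finset.powersetCard k (Finset.univ : Finset (Fin n)),
      ⋂ i ∈ T, bad i := by
    intro ω hω
    simp only [hA, Set.mem_compl_iff, Set.mem_setOf_eq, not_forall, not_le] at hω
    obtain ⟨S, hS1, hS2⟩ := hω
    set F : Finset (Fin n) := S.filter (fun i => ¬ ‖w i ω‖ ≤ D) with hF
    have hcard : (S.filter (fun i => ‖w i ω‖ ≤ D)).card + F.card = S.card :=
      Finset.card_filter_add_card_filter_not _
    have hFlow : τ * β * n < (F.card : ℝ) := by
      have h1 : (F.card : ℝ) = (S.card : ℝ) - ((S.filter (fun i => ‖w i ω‖ ≤ D)).card : ℝ) := by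
        have := hcard; push_cast [← this]; ring
      have h2 : τ * ((n:ℝ) * β) ≤ τ * S.card :=
        mul_le_mul_of_nonneg_left hS1 (le_of_lt hτ0)
      nlinarith
    have hkF : k ≤ F.card := by
      have : ⌊τ * β * n⌋₊ < F.card := (Nat.floor_lt hτβn0).2 hFlow
      omega
    obtain ⟨T, hTF, hTcard⟩ := Finset.exists_subset_card_eq hkF
    have hT1 : T ∈ Finset.powersetCard k (Finset.univ : Finset (Fin n)) :=
      Finset.mem_powersetCard.2 ⟨Finset.subset_univ T, hTcard⟩
    have hT2 : ω ∈ ⋂ i ∈ T, bad i := by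
      refine Set.mem_biInter fun i hi => ?_
      have := hTF hi
      rw [hF, Finset.mem_filter] at this
      simpa [hbad] using lt_of_not_ge this.2
    exact Set.mem_biUnion hT1 hT2
  -- probability of each intersection
  have hbadmeas : ∀ i, MeasurableSet[(inferInstance : MeasurableSpace
      (EuclideanSpace ℝ (Fin d))).comap (w i)] (bad i) := by
    intro i
    exact ⟨{x | D < ‖x‖}, measurableSet_lt measurable_const measurable_norm, rfl⟩
  have hbad_le : ∀ i, ℙ (bad i) ≤ ENNReal.ofReal p := by
    intro i
    have h1 : ℙ (bad i) = ENNReal.ofReal ((ℙ (bad i)).toReal) :=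
      (ENNReal.ofReal_toReal (measure_ne_top _ _)).symm
    rw [h1]
    exact ENNReal.ofReal_le_ofReal (htail i)
  have hinter : ∀ T : Finset (Fin n), T.card = k →
      ℙ (⋂ i ∈ T, bad i) ≤ ENNReal.ofReal (p ^ k) := by
    intro T hT
    have heq : ℙ (⋂ i ∈ T, bad i) = ∏ i ∈ T, ℙ (bad i) :=
      hindep.meas_biInter (fun i _ => hbadmeas i)
    rw [heq, ← hT, ENNReal.ofReal_pow (le_of_lt hp0), ← Finset.prod_const]
    exact Finset.prod_le_prod' (fun i _ => hbad_le i)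
  -- union bound
  have hAc : ℙ Aᶜ ≤ ENNReal.ofReal (2 ^ n * p ^ k) := by
    calc ℙ Aᶜ ≤ ℙ (⋃ T ∈ Finset.powersetCard k (Finset.univ : Finset (Fin n)),
        ⋂ i ∈ T, bad i) := measure_mono hsub
      _ ≤ ∑ T ∈ Finset.powersetCard k (Finset.univ : Finset (Fin n)),
          ℙ (⋂ i ∈ T, bad i) := measure_biUnion_finset_le _ _
      _ ≤ ∑ T ∈ Finset.powersetCard k (Finset.univ : Finset (Fin n)),
          ENNReal.ofReal (p ^ k) := Finset.sum_le_sum (fun T hT =>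
            hinter T (Finset.mem_powersetCard.1 hT).2)
      _ = (Finset.powersetCard k (Finset.univ : Finset (Fin n))).card
          * ENNReal.ofReal (p ^ k) := by rw [Finset.sum_const, nsmul_eq_mul]
      _ ≤ (2 ^ n : ℕ) * ENNReal.ofReal (p ^ k) := by
          have hc : (Finset.powersetCard k (Finset.univ : Finset (Fin n))).card ≤ 2 ^ n := by
            rw [Finset.card_powersetCard, Finset.card_univ, Fintype.card_fin]
            rcases le_or_gt k n with h | h
            · calc Nat.choose n k
                  ≤ ∑ m ∈ Finset.range (n + 1), Nat.choose n m :=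
                    Finset.single_le_sum (f := fun m => Nat.choose n m)
                      (fun _ _ => Nat.zero_le _) (Finset.mem_range.2 (by omega))
                _ = 2 ^ n := Nat.sum_range_choose n
            · rw [Nat.choose_eq_zero_of_lt h]; exact Nat.zero_le _
          exact mul_le_mul_left (by exact_mod_cast Nat.cast_le.2 hc) _
      _ = ENNReal.ofReal (2 ^ n * p ^ k) := by
          rw [ENNReal.ofReal_mul (by positivity)]
          norm_num [ENNReal.ofReal_pow]
  -- convert to real bound
  have he0 : (0:ℝ) ≤ 2 ^ n * p ^ k := by positivity
  have hAc' : (ℙ Aᶜ).toReal ≤ 2 ^ n * p ^ k :=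
    ENNReal.toReal_le_of_le_ofReal he0 hAc
  have hEbound : (2:ℝ) ^ n * p ^ k ≤ Real.exp (-(0.3:ℝ) * n) := by
    have h2 : (2:ℝ) ^ n = Real.exp ((n:ℝ) * Real.log 2) := by
      rw [Real.exp_nat_mul, Real.exp_log two_pos]
    have h3 : p ^ k = Real.exp ((k:ℝ) * (-(1 + 1/β) / τ)) := by
      rw [Real.exp_nat_mul]
    rw [h2, h3, ← Real.exp_add]
    apply Real.exp_le_exp.2
    have hlog : Real.log 2 < 0.7 := lt_trans Real.log_two_lt_d9 (by norm_num)
    have hpos : (0:ℝ) < (1 + 1/β) / τ := by positivity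
    have hkey : (τ * β * n) * ((1 + 1/β) / τ) = (1 + β) * n := by
      field_simp
      ring
    have hk2 : (1 + β) * n ≤ (k:ℝ) * ((1 + 1/β) / τ) := by
      rw [← hkey]
      exact mul_le_mul_of_nonneg_right hklt.le hpos.le
    have hn' : (1:ℝ) ≤ (n:ℝ) := by exact_mod_cast hn
    have hneg : (k:ℝ) * (-(1 + 1/β) / τ) = -((k:ℝ) * ((1 + 1/β) / τ)) := by ring
    have hn0 : (0:ℝ) ≤ (n:ℝ) := by linarith
    nlinarith [hk2, hn', hlog, hβ0, hneg,
      mul_le_mul_of_nonneg_left hlog.le hn0, mul_nonneg hβ0.le hn0]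
  have h1le : (1:ENNReal) ≤ ℙ A + ℙ Aᶜ := by
    have := measure_union_le (μ := (ℙ : Measure Ω)) A Aᶜ
    simpa using this
  have hts : (1:ℝ) ≤ (ℙ A).toReal + (ℙ Aᶜ).toReal := by
    have h := ENNReal.toReal_mono
      (by exact ENNReal.add_ne_top.2 ⟨measure_ne_top _ _, measure_ne_top _ _⟩) h1le
    rwa [ENNReal.toReal_one,
      ENNReal.toReal_add (measure_ne_top _ _) (measure_ne_top _ _)] at h
  linarith [hAc'.trans hEbound, hts]
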